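/- Let (f_n) be a sequence of functions f_n : ℝ → [0,∞) with each f_n increasing on (−∞,0], decreasing on [0,∞), ∫_ℝ f_n = 1, and lim_{n→∞} ∫_{[−δ,δ]} f_n = 1 for all δ > 0. If X ⊆ ℝ is a Borel set with ℓ(X) > 0, then there exists a ∈ X such that, setting g_n(x) = f_n(x − a), one has lim_{n→∞} ∫_X g_n(x) dx = 1. -/

import Mathlib

open MeasureTheory Filter Topology ENNReal

private lemma unimodal_measurable {g : ℝ → ℝ}
    (h1 : ∀ x y : ℝ, x ≤ y → y ≤ 0 → g x ≤ g y)
    (h2 : ∀ x y : ℝ, 0 ≤ x → x ≤ y → g y ≤ g x) : Measurable g := by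
  apply measurable_of_Ioi
  intro t
  have : Set.OrdConnected (g ⁻¹' Set.Ioi t) := by
    constructor
    rintro x hx z hz y ⟨hxy, hyz⟩
    rcases le_or_gt y 0 with h | h
    · exact lt_of_lt_of_le hx (h1 x y hxy h)
    · exact lt_of_lt_of_le hz (h2 y z h.le hyz)
  exact this.measurableSet

/-- If each `f n : ℝ → [0,∞)` is increasing on `(-∞,0]`, decreasing on `[0,∞)`,
has total integral `1`, and concentrates at `0`, and if `X` is a Borel set of positive
Lebesgue measure, then there is a point `a ∈ X` such that with `g n x = f n (x - a)` one has
`∫_X g n → 1`. -/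
theorem stmt3 (f : ℕ → ℝ → ℝ) (hpos : ∀ n x, 0 ≤ f n x)
    (hmono₁ : ∀ n, ∀ x y : ℝ, x ≤ y → y ≤ 0 → f n x ≤ f n y)
    (hmono₂ : ∀ n, ∀ x y : ℝ, 0 ≤ x → x ≤ y → f n y ≤ f n x)
    (hint : ∀ n, ∫ x : ℝ, f n x = 1)
    (hconc : ∀ δ : ℝ, 0 < δ →
      Tendsto (fun n => ∫ x in Set.Icc (-δ) δ, f n x) atTop (𝓝 1))
    (X : Set ℝ) (hX : MeasurableSet X) (hpos' : 0 < volume X) :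
    ∃ a ∈ X, Tendsto (fun n => ∫ x in X, f n (x - a)) atTop (𝓝 1) := by
  have hmeas : ∀ n, Measurable (f n) := fun n =>
    unimodal_measurable (hmono₁ n) (hmono₂ n)
  have hinteg : ∀ n, Integrable (f n) := by
    intro n
    by_contra h
    have h1 := hint n
    rw [integral_undef h] at h1
    norm_num at h1
  have hL : ∀ n, ∫⁻ x, ENNReal.ofReal (f n x) = 1 := by
    intro n
    rw [← ofReal_integral_eq_lintegral_ofReal (hinteg n)
      (Filter.Eventually.of_forall (hpos n)), hint n, ENNReal.ofReal_one]
  -- choose a density point `a ∈ X`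
  have hbes := Besicovitch.ae_tendsto_measure_inter_div_of_measurableSet
    (volume : Measure ℝ) hX.compl
  obtain ⟨a, haX, hden⟩ : ∃ a ∈ X, Tendsto
      (fun r => volume (Xᶜ ∩ Metric.closedBall a r) / volume (Metric.closedBall a r))
      (𝓝[>] 0) (𝓝 0) := by
    by_contra hcon
    push_neg at hcon
    rw [ae_iff] at hbes
    have hXB : X ⊆ {x | ¬ Tendsto
        (fun r => volume (Xᶜ ∩ Metric.closedBall x r) / volume (Metric.closedBall x r))
        (𝓝[>] 0) (𝓝 (Xᶜ.indicator 1 x))} := by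
      intro x hx
      have h0 : (Xᶜ.indicator (1 : ℝ → ℝ≥0∞) x) = 0 :=
        Set.indicator_of_notMem (by simpa using hx) _
      simp only [Set.mem_setOf_eq, h0]
      exact hcon x hx
    exact hpos'.ne' (measure_mono_null hXB hbes)
  refine ⟨a, haX, ?_⟩
  -- basic facts about the translated functions
  have hFmeas : ∀ n, Measurable fun x : ℝ => f n (x - a) := fun n =>
    (hmeas n).comp (measurable_id.sub measurable_const)
  have hτ : MeasurePreserving (fun y : ℝ => y + a) volume volume :=
    measurePreserving_add_right volume a
  have hτe : MeasurableEmbedding (fun y : ℝ => y + a) :=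
    (MeasurableEquiv.addRight a).measurableEmbedding
  have htrans : ∀ n (s : Set ℝ), ∫⁻ y in (fun y : ℝ => y + a) ⁻¹' s, ENNReal.ofReal (f n y)
      = ∫⁻ x in s, ENNReal.ofReal (f n (x - a)) := by
    intro n s
    have h := hτ.setLIntegral_comp_preimage_emb hτe
      (fun x => ENNReal.ofReal (f n (x - a))) s
    simpa using h
  have hLF : ∀ n, ∫⁻ x, ENNReal.ofReal (f n (x - a)) = 1 := by
    intro n
    have h1 := htrans n Set.univ
    simp only [Set.preimage_univ, Measure.restrict_univ] at h1
    rw [← h1]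
    exact hL n
  -- concentration of the translated functions on `Icc (a - δ) (a + δ)`
  have hconcL : ∀ δ : ℝ, 0 < δ → Tendsto
      (fun n => ∫⁻ x in Set.Icc (a - δ) (a + δ), ENNReal.ofReal (f n (x - a)))
      atTop (𝓝 1) := by
    intro δ hδ
    have heq : ∀ n, ∫⁻ x in Set.Icc (a - δ) (a + δ), ENNReal.ofReal (f n (x - a))
        = ENNReal.ofReal (∫ x in Set.Icc (-δ) δ, f n x) := by
      intro n
      rw [← htrans n _]
      have hset : (fun y : ℝ => y + a) ⁻¹' Set.Icc (a - δ) (a + δ) = Set.Icc (-δ) δ := by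
        ext y
        simp only [Set.mem_preimage, Set.mem_Icc]
        constructor <;> intro h <;> exact ⟨by linarith [h.1], by linarith [h.2]⟩
      rw [hset, ofReal_integral_eq_lintegral_ofReal ((hinteg n).restrict)
        (Filter.Eventually.of_forall (hpos n))]
    simp only [heq]
    have h1 : Tendsto (fun n => ENNReal.ofReal (∫ x in Set.Icc (-δ) δ, f n x)) atTop
        (𝓝 (ENNReal.ofReal 1)) :=
      (ENNReal.continuous_ofReal.tendsto 1).comp (hconc δ hδ)
    simpa using h1
  -- superlevel sets are order-connected and contain `a`
  have hord : ∀ n (t : ℝ), Set.OrdConnected {x : ℝ | t < f n (x - a)} := by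
    intro n t
    constructor
    rintro x hx z hz y ⟨hxy, hyz⟩
    simp only [Set.mem_setOf_eq] at hx hz ⊢
    rcases le_or_gt y a with h | h
    · exact lt_of_lt_of_le hx (hmono₁ n (x - a) (y - a) (by linarith) (by linarith))
    · exact lt_of_lt_of_le hz (hmono₂ n (y - a) (z - a) (by linarith) (by linarith))
  have hmax : ∀ n (x : ℝ), f n (x - a) ≤ f n (a - a) := by
    intro n x
    rcases le_or_gt x a with h | h
    · exact hmono₁ n (x - a) (a - a) (by linarith) (by simp)
    · exact hmono₂ n (a - a) (x - a) (by simp) (by linarith)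
  -- the main step: the integral over `Xᶜ` tends to zero
  have hΦ : Tendsto (fun n => ∫⁻ x in Xᶜ, ENNReal.ofReal (f n (x - a))) atTop (𝓝 0) := by
    rw [ENNReal.tendsto_atTop_zero]
    intro ε hε
    set e : ℝ≥0∞ := min ε 1 with he
    have he0 : 0 < e := lt_min hε zero_lt_one
    have he1 : e ≤ 1 := min_le_right _ _
    set θ : ℝ≥0∞ := e / 2 / 2 with hθ
    have hθ0 : 0 < θ := ENNReal.div_pos (ENNReal.div_pos he0.ne' ENNReal.ofNat_ne_top).ne'
      ENNReal.ofNat_ne_top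
    have h2θ : 2 * θ = e / 2 := ENNReal.mul_div_cancel two_ne_zero ENNReal.ofNat_ne_top
    -- choose δ from the density point property
    have hmem := mem_map.1 (hden (Iio_mem_nhds hθ0))
    rw [mem_nhdsGT_iff_exists_Ioc_subset] at hmem
    obtain ⟨δ, hδ0, hsub⟩ := hmem
    have hδ0 : (0 : ℝ) < δ := hδ0
    have hball : ∀ r : ℝ, 0 < r → r ≤ δ →
        volume (Xᶜ ∩ Metric.closedBall a r) ≤ θ * volume (Metric.closedBall a r) := by
      intro r h0 hr
      have hin : volume (Xᶜ ∩ Metric.closedBall a r) / volume (Metric.closedBall a r) < θ :=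
        hsub ⟨h0, hr⟩
      have hvol0 : volume (Metric.closedBall a r) ≠ 0 := by
        rw [Real.volume_closedBall]
        simp only [ne_eq, ENNReal.ofReal_eq_zero, not_le]
        linarith
      have hvolT : volume (Metric.closedBall a r) ≠ ⊤ := by
        rw [Real.volume_closedBall]; exact ENNReal.ofReal_ne_top
      exact (ENNReal.div_le_iff hvol0 hvolT).1 hin.le
    -- the layer-cake bound
    have hkey : ∀ n, ∫⁻ x in Xᶜ ∩ Set.Icc (a - δ) (a + δ), ENNReal.ofReal (f n (x - a))
        ≤ 2 * θ * ∫⁻ x in Set.Icc (a - δ) (a + δ), ENNReal.ofReal (f n (x - a)) := by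
      intro n
      have hm : Measurable fun x : ℝ => f n (x - a) := hFmeas n
      rw [lintegral_eq_lintegral_meas_lt _ (Filter.Eventually.of_forall fun x => hpos n _)
          hm.aemeasurable,
        lintegral_eq_lintegral_meas_lt _ (Filter.Eventually.of_forall fun x => hpos n _)
          hm.aemeasurable,
        ← lintegral_const_mul' (2 * θ) _
          (by rw [h2θ]; exact ne_top_of_le_ne_top one_ne_top (ENNReal.half_le_self.trans he1))]
      apply lintegral_mono
      intro t
      have hSmeas : MeasurableSet {x : ℝ | t < f n (x - a)} := (hord n t).measurableSet
      simp only [Measure.restrict_apply hSmeas]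
      set S : Set ℝ := {x : ℝ | t < f n (x - a)} ∩ Set.Icc (a - δ) (a + δ) with hS
      rcases S.eq_empty_or_nonempty with hSe | ⟨x₀, hx₀⟩
      · have : {x : ℝ | t < f n (x - a)} ∩ (Xᶜ ∩ Set.Icc (a - δ) (a + δ)) = ∅ := by
          rw [Set.eq_empty_iff_forall_notMem]
          rintro x ⟨h1, _, h3⟩
          exact Set.eq_empty_iff_forall_notMem.1 hSe x ⟨h1, h3⟩
        simp [this]
      · have haS : a ∈ S := by
          refine ⟨lt_of_lt_of_le hx₀.1 (hmax n x₀), ?_⟩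
          constructor <;> simp <;> linarith
        have hSord : Set.OrdConnected S := (hord n t).inter Set.ordConnected_Icc
        set r : ℝ := sSup ((fun x => |x - a|) '' S) with hr
        have habs : ∀ x ∈ S, |x - a| ≤ δ := by
          rintro x hx
          rw [abs_le]
          exact ⟨by linarith [hx.2.1], by linarith [hx.2.2]⟩
        have hbdd : BddAbove ((fun x => |x - a|) '' S) := by
          refine ⟨δ, ?_⟩
          rintro _ ⟨x, hx, rfl⟩
          exact habs x hx
        have hrδ : r ≤ δ := csSup_le ⟨|x₀ - a|, ⟨x₀, hx₀, rfl⟩⟩ (by rintro _ ⟨x, hx, rfl⟩; exact habs x hx)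
        have hr0 : 0 ≤ r := by
          have h := le_csSup hbdd ⟨a, haS, rfl⟩
          simpa using h
        have hScb : S ⊆ Metric.closedBall a r := by
          intro x hx
          rw [Metric.mem_closedBall, Real.dist_eq]
          exact le_csSup hbdd ⟨x, hx, rfl⟩
        have hfin : volume S ≠ ⊤ := by
          refine ((measure_mono Set.inter_subset_right).trans_lt ?_).ne
          rw [Real.volume_Icc]
          exact ENNReal.ofReal_lt_top
        have hvolS : ENNReal.ofReal r ≤ volume S := by
          have hx' : ∀ x ∈ S, |x - a| ≤ (volume S).toReal := by
            intro x hx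
            have hsub2 : Set.uIcc a x ⊆ S := hSord.uIcc_subset haS hx
            have hv : ENNReal.ofReal |x - a| ≤ volume S := by
              calc ENNReal.ofReal |x - a| = volume (Set.uIcc a x) := by
                    rw [Set.uIcc, Real.volume_Icc]
                    congr 1
                    rw [max_sub_min_eq_abs, abs_sub_comm]
                _ ≤ volume S := measure_mono hsub2
            exact (ENNReal.ofReal_le_iff_le_toReal hfin).1 hv
          have hrt : r ≤ (volume S).toReal :=
            csSup_le ⟨|x₀ - a|, ⟨x₀, hx₀, rfl⟩⟩ (by rintro _ ⟨x, hx, rfl⟩; exact hx' x hx)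
          calc ENNReal.ofReal r ≤ ENNReal.ofReal (volume S).toReal :=
                ENNReal.ofReal_le_ofReal hrt
            _ = volume S := ENNReal.ofReal_toReal hfin
        have hstep : volume ({x : ℝ | t < f n (x - a)} ∩ (Xᶜ ∩ Set.Icc (a - δ) (a + δ)))
            ≤ volume (Xᶜ ∩ Metric.closedBall a r) := by
          apply measure_mono
          rintro x ⟨h1, h2, h3⟩
          exact ⟨h2, hScb ⟨h1, h3⟩⟩
        rcases eq_or_lt_of_le hr0 with h0 | h0
        · have hz : volume (Xᶜ ∩ Metric.closedBall a r) = 0 := by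
            have : Metric.closedBall a r = {a} := by rw [← h0, Metric.closedBall_zero]
            refine le_antisymm ?_ zero_le
            calc volume (Xᶜ ∩ Metric.closedBall a r) ≤ volume ({a} : Set ℝ) := by
                  rw [← this]; exact measure_mono Set.inter_subset_right
              _ = 0 := Real.volume_singleton
          calc volume ({x : ℝ | t < f n (x - a)} ∩ (Xᶜ ∩ Set.Icc (a - δ) (a + δ)))
              ≤ 0 := hz ▸ hstep
            _ ≤ _ := zero_le
        · calc volume ({x : ℝ | t < f n (x - a)} ∩ (Xᶜ ∩ Set.Icc (a - δ) (a + δ)))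
              ≤ volume (Xᶜ ∩ Metric.closedBall a r) := hstep
            _ ≤ θ * volume (Metric.closedBall a r) := hball r h0 hrδ
            _ = θ * ENNReal.ofReal (2 * r) := by rw [Real.volume_closedBall]
            _ = 2 * θ * ENNReal.ofReal r := by
                rw [ENNReal.ofReal_mul (by norm_num : (0:ℝ) ≤ 2)]
                rw [show ENNReal.ofReal (2:ℝ) = 2 by simp]
                ring
            _ ≤ 2 * θ * volume S := by exact mul_le_mul_right hvolS _
    -- assemble
    have htail : ∀ᶠ n in atTop, ∫⁻ x in (Set.Icc (a - δ) (a + δ))ᶜ, ENNReal.ofReal (f n (x - a))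
        ≤ e / 2 := by
      have he2 : e / 2 ≤ 1 := le_trans (ENNReal.half_le_self) he1
      have hlt : (1 : ℝ≥0∞) - e / 2 < 1 :=
        ENNReal.sub_lt_self one_ne_top one_ne_zero
          (ENNReal.div_pos he0.ne' ENNReal.ofNat_ne_top).ne'
      filter_upwards [(hconcL δ hδ0).eventually (lt_mem_nhds hlt)] with n hn
      have hadd := lintegral_add_compl (μ := volume) (fun x => ENNReal.ofReal (f n (x - a)))
        (measurableSet_Icc : MeasurableSet (Set.Icc (a - δ) (a + δ)))
      rw [hLF n] at hadd
      have hle : ∫⁻ x in Set.Icc (a - δ) (a + δ), ENNReal.ofReal (f n (x - a)) ≤ 1 := by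
        rw [← hadd]; exact le_self_add
      have heq : ∫⁻ x in (Set.Icc (a - δ) (a + δ))ᶜ, ENNReal.ofReal (f n (x - a))
          = 1 - ∫⁻ x in Set.Icc (a - δ) (a + δ), ENNReal.ofReal (f n (x - a)) :=
        ENNReal.eq_sub_of_add_eq (hle.trans_lt (by norm_num)).ne (by rw [add_comm]; exact hadd)
      rw [heq]
      rw [tsub_le_iff_left]
      calc (1 : ℝ≥0∞) = (1 - e / 2) + e / 2 := (tsub_add_cancel_of_le he2).symm
        _ ≤ (∫⁻ x in Set.Icc (a - δ) (a + δ), ENNReal.ofReal (f n (x - a))) + e / 2 := by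
            exact add_le_add_left hn.le _
    rw [eventually_atTop] at htail
    obtain ⟨N, hN⟩ := htail
    refine ⟨N, fun n hn => ?_⟩
    have hsplit : ∫⁻ x in Xᶜ, ENNReal.ofReal (f n (x - a))
        ≤ (∫⁻ x in Xᶜ ∩ Set.Icc (a - δ) (a + δ), ENNReal.ofReal (f n (x - a)))
          + ∫⁻ x in (Set.Icc (a - δ) (a + δ))ᶜ, ENNReal.ofReal (f n (x - a)) := by
      refine le_trans (lintegral_mono_set ?_) (lintegral_union_le _ _ _)
      intro x hx
      by_cases h : x ∈ Set.Icc (a - δ) (a + δ)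
      · exact Or.inl ⟨hx, h⟩
      · exact Or.inr h
    have hIccle : ∫⁻ x in Set.Icc (a - δ) (a + δ), ENNReal.ofReal (f n (x - a)) ≤ 1 := by
      rw [← hLF n]
      exact setLIntegral_le_lintegral _ _
    calc ∫⁻ x in Xᶜ, ENNReal.ofReal (f n (x - a))
        ≤ (∫⁻ x in Xᶜ ∩ Set.Icc (a - δ) (a + δ), ENNReal.ofReal (f n (x - a)))
          + ∫⁻ x in (Set.Icc (a - δ) (a + δ))ᶜ, ENNReal.ofReal (f n (x - a)) := hsplit
      _ ≤ 2 * θ * (∫⁻ x in Set.Icc (a - δ) (a + δ), ENNReal.ofReal (f n (x - a))) + e / 2 :=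
          add_le_add (hkey n) (hN n hn)
      _ ≤ 2 * θ * 1 + e / 2 := add_le_add_left (mul_le_mul_right hIccle _) _
      _ = e / 2 + e / 2 := by rw [mul_one, h2θ]
      _ = e := ENNReal.add_halves e
      _ ≤ ε := min_le_left _ _
  -- conclude
  have hXtends : Tendsto (fun n => ∫⁻ x in X, ENNReal.ofReal (f n (x - a))) atTop (𝓝 1) := by
    have hXeq : ∀ n, ∫⁻ x in X, ENNReal.ofReal (f n (x - a))
        = 1 - ∫⁻ x in Xᶜ, ENNReal.ofReal (f n (x - a)) := by
      intro n
      have hadd := lintegral_add_compl (μ := volume) (fun x => ENNReal.ofReal (f n (x - a))) hX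
      rw [hLF n] at hadd
      have hle : ∫⁻ x in Xᶜ, ENNReal.ofReal (f n (x - a)) ≤ 1 := by
        rw [← hadd]; exact le_add_self
      exact ENNReal.eq_sub_of_add_eq (hle.trans_lt (by norm_num)).ne hadd
    simp only [hXeq]
    have := ENNReal.Tendsto.sub (tendsto_const_nhds : Tendsto (fun _ : ℕ => (1:ℝ≥0∞)) atTop (𝓝 1))
      hΦ (Or.inl one_ne_top)
    simpa using this
  have heq : ∀ n, ∫ x in X, f n (x - a) = (∫⁻ x in X, ENNReal.ofReal (f n (x - a))).toReal := by
    intro n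
    exact integral_eq_lintegral_of_nonneg_ae (Filter.Eventually.of_forall fun x => hpos n _)
      (hFmeas n).aestronglyMeasurable
  simp only [heq]
  have := (ENNReal.tendsto_toReal one_ne_top).comp hXtends
  exact this
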